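/- Let h : [0,L] → ℝ be continuous and positive, and let f : [0,L] → ℝ be continuously differentiable. Then f(0)² ≤ (2 / ∫_0^L h(s) ds) ∫_0^L f(t)² h(t) dt + 2 (∫_0^L h(s)^{-1} ds) ∫_0^L f'(t)² h(t) dt. -/
import Mathlib


open MeasureTheory intervalIntegral

private lemma cs_interval {a b : ℝ} (hab : a ≤ b) {u v : ℝ → ℝ}
    (hu : ContinuousOn u (Set.Icc a b)) (hv : ContinuousOn v (Set.Icc a b)) :
    (∫ t in a..b, u t * v t) ^ 2 ≤
      (∫ t in a..b, (u t) ^ 2) * (∫ t in a..b, (v t) ^ 2) := by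
  have hiu : IntervalIntegrable (fun t => (u t) ^ 2) volume a b :=
    (hu.pow 2).intervalIntegrable_of_Icc hab
  have hiv : IntervalIntegrable (fun t => (v t) ^ 2) volume a b :=
    (hv.pow 2).intervalIntegrable_of_Icc hab
  have hiuv : IntervalIntegrable (fun t => u t * v t) volume a b :=
    (hu.mul hv).intervalIntegrable_of_Icc hab
  set U := ∫ t in a..b, (u t) ^ 2 with hU
  set V := ∫ t in a..b, (v t) ^ 2 with hV
  set W := ∫ t in a..b, u t * v t with hW
  have key : ∀ lam : ℝ, 0 ≤ V * lam ^ 2 + (2 * W) * lam + U := by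
    intro lam
    have h1 : ∀ t, (lam * v t + u t) ^ 2 =
        lam ^ 2 * (v t) ^ 2 + 2 * lam * (u t * v t) + (u t) ^ 2 := by
      intro t; ring
    have h2 : (0:ℝ) ≤ ∫ t in a..b, (lam * v t + u t) ^ 2 :=
      intervalIntegral.integral_nonneg hab (fun t _ => sq_nonneg _)
    have h3 : (∫ t in a..b, (lam * v t + u t) ^ 2)
        = lam ^ 2 * V + 2 * lam * W + U := by
      rw [show (fun t => (lam * v t + u t) ^ 2)
          = (fun t => lam ^ 2 * (v t) ^ 2 + 2 * lam * (u t * v t) + (u t) ^ 2) from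
          funext h1]
      rw [intervalIntegral.integral_add ((hiv.const_mul _).add (hiuv.const_mul _)) hiu,
        intervalIntegral.integral_add (hiv.const_mul _) (hiuv.const_mul _),
        intervalIntegral.integral_const_mul, intervalIntegral.integral_const_mul]
    rw [h3] at h2
    linarith
  have key' : ∀ x : ℝ, 0 ≤ V * (x * x) + (2 * W) * x + U := fun x => by
    simpa [pow_two] using key x
  have hd : discrim V (2 * W) U ≤ 0 := discrim_le_zero key'
  rw [discrim] at hd
  nlinarith

/-- One-dimensional trace inequality along a normal ray with volume density `h`:
`f(0)²` is controlled by the weighted `L²` norms of `f` and `f'`. -/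
theorem trace_inequality_ray (L : ℝ) (hL : 0 < L)
    (h : ℝ → ℝ) (hc : ContinuousOn h (Set.Icc (0 : ℝ) L))
    (hpos : ∀ t ∈ Set.Icc (0 : ℝ) L, 0 < h t)
    (f f' : ℝ → ℝ)
    (hderiv : ∀ t ∈ Set.Icc (0 : ℝ) L, HasDerivAt f (f' t) t)
    (hcont : ContinuousOn f' (Set.Icc (0 : ℝ) L)) :
    (f 0) ^ 2 ≤
      (2 / ∫ s in (0 : ℝ)..L, h s) * (∫ t in (0 : ℝ)..L, (f t) ^ 2 * h t) +
        2 * (∫ s in (0 : ℝ)..L, (h s)⁻¹) * (∫ t in (0 : ℝ)..L, (f' t) ^ 2 * h t) := by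
  have h0L : (0:ℝ) ≤ L := hL.le
  have hfC : ContinuousOn f (Set.Icc (0:ℝ) L) := fun t ht =>
    (hderiv t ht).continuousAt.continuousWithinAt
  have hinvC : ContinuousOn (fun t => (h t)⁻¹) (Set.Icc (0:ℝ) L) :=
    hc.inv₀ (fun t ht => (hpos t ht).ne')
  have hih : IntervalIntegrable h volume 0 L := hc.intervalIntegrable_of_Icc h0L
  have hiinv : IntervalIntegrable (fun t => (h t)⁻¹) volume 0 L :=
    hinvC.intervalIntegrable_of_Icc h0L
  have hif2h : IntervalIntegrable (fun t => (f t) ^ 2 * h t) volume 0 L :=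
    ((hfC.pow 2).mul hc).intervalIntegrable_of_Icc h0L
  have hif'2hC : ContinuousOn (fun t => (f' t) ^ 2 * h t) (Set.Icc (0:ℝ) L) :=
    (hcont.pow 2).mul hc
  have hif'2h : IntervalIntegrable (fun t => (f' t) ^ 2 * h t) volume 0 L :=
    hif'2hC.intervalIntegrable_of_Icc h0L
  set A := ∫ s in (0:ℝ)..L, (h s)⁻¹ with hA
  set B := ∫ t in (0:ℝ)..L, (f' t) ^ 2 * h t with hB
  set H := ∫ s in (0:ℝ)..L, h s with hH
  set X := ∫ t in (0:ℝ)..L, (f t) ^ 2 * h t with hX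
  have hHpos : 0 < H :=
    intervalIntegral_pos_of_pos_on hih (fun x hx => hpos x (Set.mem_Icc_of_Ioo hx)) hL
  have hAnn : 0 ≤ A := intervalIntegral.integral_nonneg h0L
    (fun t ht => (inv_pos.mpr (hpos t ht)).le)
  have hBnn : 0 ≤ B := intervalIntegral.integral_nonneg h0L
    (fun t ht => mul_nonneg (sq_nonneg _) (hpos t ht).le)
  -- pointwise bound
  have key : ∀ t ∈ Set.Icc (0:ℝ) L, (f 0) ^ 2 ≤ 2 * (f t) ^ 2 + 2 * (A * B) := by
    intro t ht
    obtain ⟨ht0, htL⟩ := ht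
    have hsub : Set.Icc (0:ℝ) t ⊆ Set.Icc (0:ℝ) L := Set.Icc_subset_Icc le_rfl htL
    have hftc : f t - f 0 = ∫ x in (0:ℝ)..t, f' x := by
      refine (intervalIntegral.integral_eq_sub_of_hasDerivAt (fun x hx => ?_) ?_).symm
      · exact hderiv x (hsub (by rwa [Set.uIcc_of_le ht0] at hx))
      · exact (hcont.mono hsub).intervalIntegrable_of_Icc ht0
    -- Cauchy–Schwarz on [0, t]
    set u : ℝ → ℝ := fun x => f' x * Real.sqrt (h x) with hu
    set v : ℝ → ℝ := fun x => Real.sqrt ((h x)⁻¹) with hv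
    have huC : ContinuousOn u (Set.Icc (0:ℝ) t) :=
      (hcont.mono hsub).mul (Real.continuous_sqrt.comp_continuousOn (hc.mono hsub))
    have hvC : ContinuousOn v (Set.Icc (0:ℝ) t) :=
      Real.continuous_sqrt.comp_continuousOn (hinvC.mono hsub)
    have cs := cs_interval ht0 huC hvC
    have e1 : (∫ x in (0:ℝ)..t, u x * v x) = ∫ x in (0:ℝ)..t, f' x := by
      refine intervalIntegral.integral_congr (fun x hx => ?_)
      rw [Set.uIcc_of_le ht0] at hx
      have hx' : 0 < h x := hpos x (hsub hx)
      simp only [hu, hv]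
      rw [Real.sqrt_inv, mul_assoc, mul_inv_cancel₀ (Real.sqrt_ne_zero'.mpr hx'), mul_one]
    have e2 : (∫ x in (0:ℝ)..t, (u x) ^ 2) = ∫ x in (0:ℝ)..t, (f' x) ^ 2 * h x := by
      refine intervalIntegral.integral_congr (fun x hx => ?_)
      rw [Set.uIcc_of_le ht0] at hx
      have hx' : 0 < h x := hpos x (hsub hx)
      simp only [hu]
      rw [mul_pow, Real.sq_sqrt hx'.le]
    have e3 : (∫ x in (0:ℝ)..t, (v x) ^ 2) = ∫ x in (0:ℝ)..t, (h x)⁻¹ := by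
      refine intervalIntegral.integral_congr (fun x hx => ?_)
      rw [Set.uIcc_of_le ht0] at hx
      have hx' : 0 < h x := hpos x (hsub hx)
      simp only [hv]
      rw [Real.sq_sqrt (inv_pos.mpr hx').le]
    rw [e1, e2, e3] at cs
    have m1 : (∫ x in (0:ℝ)..t, (f' x) ^ 2 * h x) ≤ B :=
      intervalIntegral.integral_mono_interval le_rfl ht0 htL
        ((ae_restrict_iff' measurableSet_Ioc).mpr (ae_of_all _ fun x hx =>
          mul_nonneg (sq_nonneg _) (hpos x ⟨hx.1.le, hx.2⟩).le)) hif'2h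
    have m2 : (∫ x in (0:ℝ)..t, (h x)⁻¹) ≤ A :=
      intervalIntegral.integral_mono_interval le_rfl ht0 htL
        ((ae_restrict_iff' measurableSet_Ioc).mpr (ae_of_all _ fun x hx =>
          (inv_pos.mpr (hpos x ⟨hx.1.le, hx.2⟩)).le)) hiinv
    have if2nn : (0:ℝ) ≤ ∫ x in (0:ℝ)..t, (f' x) ^ 2 * h x :=
      intervalIntegral.integral_nonneg ht0
        (fun x hx => mul_nonneg (sq_nonneg _) (hpos x (hsub hx)).le)
    have csAB : (f t - f 0) ^ 2 ≤ B * A := by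
      rw [hftc]
      calc (∫ x in (0:ℝ)..t, f' x) ^ 2
          ≤ (∫ x in (0:ℝ)..t, (f' x) ^ 2 * h x) * (∫ x in (0:ℝ)..t, (h x)⁻¹) := cs
        _ ≤ B * A := by
            apply mul_le_mul m1 m2 (intervalIntegral.integral_nonneg ht0
              (fun x hx => (inv_pos.mpr (hpos x (hsub hx))).le)) hBnn
    nlinarith [csAB, sq_nonneg (2 * f t - f 0)]
  -- multiply by h and integrate
  have step : (f 0) ^ 2 * H ≤ 2 * X + 2 * (A * B) * H := by
    have mono : (∫ t in (0:ℝ)..L, (f 0) ^ 2 * h t)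
        ≤ ∫ t in (0:ℝ)..L, (2 * (f t) ^ 2 + 2 * (A * B)) * h t := by
      refine intervalIntegral.integral_mono_on h0L (hih.const_mul _)
        ((((continuousOn_const.mul (hfC.pow 2)).add
          continuousOn_const).mul hc).intervalIntegrable_of_Icc h0L) (fun x hx => ?_)
      exact mul_le_mul_of_nonneg_right (key x hx) (hpos x hx).le
    have lhs : (∫ t in (0:ℝ)..L, (f 0) ^ 2 * h t) = (f 0) ^ 2 * H := by
      rw [intervalIntegral.integral_const_mul]
    have rhs : (∫ t in (0:ℝ)..L, (2 * (f t) ^ 2 + 2 * (A * B)) * h t)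
        = 2 * X + 2 * (A * B) * H := by
      have : ∀ t : ℝ, (2 * (f t) ^ 2 + 2 * (A * B)) * h t
          = 2 * ((f t) ^ 2 * h t) + 2 * (A * B) * h t := fun t => by ring
      rw [show (fun t => (2 * (f t) ^ 2 + 2 * (A * B)) * h t)
          = (fun t => 2 * ((f t) ^ 2 * h t) + 2 * (A * B) * h t) from funext this,
        intervalIntegral.integral_add (hif2h.const_mul 2) (hih.const_mul _),
        intervalIntegral.integral_const_mul, intervalIntegral.integral_const_mul]
    rw [lhs, rhs] at mono
    exact mono
  have hH0 : H ≠ 0 := hHpos.ne'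
  have final : (f 0) ^ 2 ≤ (2 * X + 2 * (A * B) * H) / H := by
    rw [le_div_iff₀ hHpos]
    exact step
  calc (f 0) ^ 2 ≤ (2 * X + 2 * (A * B) * H) / H := final
    _ = 2 / H * X + 2 * A * B := by
        rw [add_div, mul_div_cancel_right₀ _ hH0]; ring
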